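/- arXiv:2208.13624 — 3 statements merged into one kernel-verified Lean document; each statement's English description precedes it below -/
import Mathlib

section
/- Let d̂ be a balanced classifier with values in (0,1) and let d(θ,x) = p(θ,x)/(p(θ,x) + p(θ)p(x)) be the Bayes optimal classifier. Then E_{p(θ,x)}[d(θ,x)/d̂(θ,x)] ≥ 1, i.e. the expectation over the joint density of the ratio of the optimal classifier to the balanced classifier is at least 1. -/
open MeasureTheory Set

/-- For a balanced classifier `dhat` with values in (0,1) and the Bayes optimal
classifier `d z = pJ z / (pJ z + pT z.1 * pX z.2)`, we have `E_{p(θ,x)}[d/dhat] ≥ 1`. -/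
theorem balanced_ratio_joint_ge_one {Θ X : Type*} [MeasurableSpace Θ] [MeasurableSpace X]
    (μ : Measure Θ) (ν : Measure X) [SigmaFinite μ] [SigmaFinite ν]
    (pJ : Θ × X → ℝ) (pT : Θ → ℝ) (pX : X → ℝ)
    (hpJ : ∀ z, 0 ≤ pJ z) (hpJ1 : ∫ z, pJ z ∂(μ.prod ν) = 1)
    (hpT : ∀ θ, 0 ≤ pT θ) (hpX : ∀ x, 0 ≤ pX x)
    (hmargT : ∀ θ, pT θ = ∫ x, pJ (θ, x) ∂ν)
    (hmargX : ∀ x, pX x = ∫ θ, pJ (θ, x) ∂μ)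
    (hpos : ∀ z, 0 < pJ z + pT z.1 * pX z.2)
    (dhat : Θ × X → ℝ) (hdm : Measurable dhat)
    (hd01 : ∀ z, dhat z ∈ Set.Ioo (0 : ℝ) 1)
    (hbal : ∫ z, (pJ z + pT z.1 * pX z.2) * dhat z ∂(μ.prod ν) = 1)
    (hint : Integrable
      (fun z => pJ z * ((pJ z / (pJ z + pT z.1 * pX z.2)) / dhat z)) (μ.prod ν))
    (hintlog : Integrable
      (fun z => pJ z * Real.log ((pJ z / (pJ z + pT z.1 * pX z.2)) / dhat z)) (μ.prod ν)) :
    1 ≤ ∫ z, pJ z * ((pJ z / (pJ z + pT z.1 * pX z.2)) / dhat z) ∂(μ.prod ν) := by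
  have hIpJ : Integrable pJ (μ.prod ν) := by
    by_contra h
    rw [integral_undef h] at hpJ1; norm_num at hpJ1
  have hIg : Integrable (fun z => (pJ z + pT z.1 * pX z.2) * dhat z) (μ.prod ν) := by
    by_contra h
    rw [integral_undef h] at hbal; norm_num at hbal
  have hmono : ∀ z, 2 * pJ z - (pJ z + pT z.1 * pX z.2) * dhat z ≤
      pJ z * ((pJ z / (pJ z + pT z.1 * pX z.2)) / dhat z) := by
    intro z
    have hs := hpos z
    have ht := (hd01 z).1
    have hst : 0 < (pJ z + pT z.1 * pX z.2) * dhat z := mul_pos hs ht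
    have e : pJ z * ((pJ z / (pJ z + pT z.1 * pX z.2)) / dhat z) =
        pJ z ^ 2 / ((pJ z + pT z.1 * pX z.2) * dhat z) := by
      field_simp
    rw [e, le_div_iff₀ hst]
    nlinarith [sq_nonneg (pJ z - (pJ z + pT z.1 * pX z.2) * dhat z)]
  have hIlhs : Integrable (fun z => 2 * pJ z - (pJ z + pT z.1 * pX z.2) * dhat z)
      (μ.prod ν) := (hIpJ.const_mul 2).sub hIg
  have hval : ∫ z, (2 * pJ z - (pJ z + pT z.1 * pX z.2) * dhat z) ∂(μ.prod ν) = 1 := by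
    rw [integral_sub (hIpJ.const_mul 2) hIg, MeasureTheory.integral_const_mul, hpJ1, hbal]; norm_num
  calc (1 : ℝ) = ∫ z, (2 * pJ z - (pJ z + pT z.1 * pX z.2) * dhat z) ∂(μ.prod ν) := hval.symm
    _ ≤ _ := integral_mono hIlhs hint hmono
end

section
/- Let d̂ be a balanced classifier with values in (0,1) and let d(θ,x) = p(θ,x)/(p(θ,x) + p(θ)p(x)). Then E_{p(θ)p(x)}[(1 − d(θ,x))/(1 − d̂(θ,x))] ≥ 1. -/
open MeasureTheory Set

/-- For a balanced classifier `dhat` with values in (0,1) and the Bayes optimal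
classifier `d`, we have `E_{p(θ)p(x)}[(1 - d)/(1 - dhat)] ≥ 1`. -/
theorem balanced_ratio_marginal_ge_one {Θ X : Type*} [MeasurableSpace Θ] [MeasurableSpace X]
    (μ : Measure Θ) (ν : Measure X) [SigmaFinite μ] [SigmaFinite ν]
    (pJ : Θ × X → ℝ) (pT : Θ → ℝ) (pX : X → ℝ)
    (hpJ : ∀ z, 0 ≤ pJ z) (hpJ1 : ∫ z, pJ z ∂(μ.prod ν) = 1)
    (hpT : ∀ θ, 0 ≤ pT θ) (hpX : ∀ x, 0 ≤ pX x)
    (hmargT : ∀ θ, pT θ = ∫ x, pJ (θ, x) ∂ν)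
    (hmargX : ∀ x, pX x = ∫ θ, pJ (θ, x) ∂μ)
    (hpos : ∀ z, 0 < pJ z + pT z.1 * pX z.2)
    (dhat : Θ × X → ℝ) (hdm : Measurable dhat)
    (hd01 : ∀ z, dhat z ∈ Set.Ioo (0 : ℝ) 1)
    (hbal : ∫ z, (pJ z + pT z.1 * pX z.2) * dhat z ∂(μ.prod ν) = 1)
    (hint : Integrable
      (fun z => pT z.1 * pX z.2 *
        ((1 - pJ z / (pJ z + pT z.1 * pX z.2)) / (1 - dhat z))) (μ.prod ν))
    (hintlog : Integrable
      (fun z => pT z.1 * pX z.2 *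
        Real.log ((1 - pJ z / (pJ z + pT z.1 * pX z.2)) / (1 - dhat z))) (μ.prod ν)) :
    1 ≤ ∫ z, pT z.1 * pX z.2 *
        ((1 - pJ z / (pJ z + pT z.1 * pX z.2)) / (1 - dhat z)) ∂(μ.prod ν) := by
  -- pJ is integrable (otherwise its integral would be 0, not 1)
  have hpJint : Integrable pJ (μ.prod ν) := by
    by_contra h
    rw [integral_undef h] at hpJ1
    norm_num at hpJ1
  -- pT and pX are integrable
  have hpTint : Integrable pT μ := by
    have := hpJint.integral_prod_left
    exact this.congr (Filter.Eventually.of_forall fun θ => (hmargT θ).symm)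
  have hpXint : Integrable pX ν := by
    have := hpJint.integral_prod_right
    exact this.congr (Filter.Eventually.of_forall fun x => (hmargX x).symm)
  have hpT1 : ∫ θ, pT θ ∂μ = 1 := by
    rw [integral_congr_ae (Filter.Eventually.of_forall hmargT), ← integral_prod _ hpJint, hpJ1]
  have hpX1 : ∫ x, pX x ∂ν = 1 := by
    rw [integral_congr_ae (Filter.Eventually.of_forall hmargX), ← integral_prod_symm _ hpJint,
      hpJ1]
  -- the product density q
  have hqint : Integrable (fun z : Θ × X => pT z.1 * pX z.2) (μ.prod ν) :=
    hpTint.mul_prod hpXint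
  have hq1 : ∫ z, pT z.1 * pX z.2 ∂(μ.prod ν) = 1 := by
    rw [integral_prod_mul, hpT1, hpX1]; norm_num
  -- (pJ + q) * dhat is integrable
  have hbalint : Integrable (fun z => (pJ z + pT z.1 * pX z.2) * dhat z) (μ.prod ν) := by
    by_contra h
    rw [integral_undef h] at hbal
    norm_num at hbal
  -- s = (pJ + q) * (1 - dhat)
  have hsint : Integrable (fun z => (pJ z + pT z.1 * pX z.2) * (1 - dhat z)) (μ.prod ν) := by
    have : (fun z => (pJ z + pT z.1 * pX z.2) * (1 - dhat z)) =
        fun z => (pJ z + pT z.1 * pX z.2) - (pJ z + pT z.1 * pX z.2) * dhat z := by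
      funext z; ring
    rw [this]
    exact (hpJint.add hqint).sub hbalint
  have hsval : ∫ z, (pJ z + pT z.1 * pX z.2) * (1 - dhat z) ∂(μ.prod ν) = 1 := by
    have : (fun z : Θ × X => (pJ z + pT z.1 * pX z.2) * (1 - dhat z)) =
        fun z => (pJ z + pT z.1 * pX z.2) - (pJ z + pT z.1 * pX z.2) * dhat z := by
      funext z; ring
    have hsum : Integrable (fun z : Θ × X => pJ z + pT z.1 * pX z.2) (μ.prod ν) :=
      hpJint.add hqint
    rw [this, integral_sub hsum hbalint, integral_add hpJint hqint, hpJ1, hq1, hbal]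
    norm_num
  -- the lower bound function 2q - s
  have hlbint : Integrable
      (fun z => 2 * (pT z.1 * pX z.2) - (pJ z + pT z.1 * pX z.2) * (1 - dhat z)) (μ.prod ν) :=
    ((hqint.const_mul 2).sub hsint)
  have hlbval : ∫ z, (2 * (pT z.1 * pX z.2) - (pJ z + pT z.1 * pX z.2) * (1 - dhat z))
      ∂(μ.prod ν) = 1 := by
    rw [integral_sub (hqint.const_mul 2) hsint, integral_const_mul, hq1, hsval]
    norm_num
  -- pointwise inequality
  have hpw : ∀ z, 2 * (pT z.1 * pX z.2) - (pJ z + pT z.1 * pX z.2) * (1 - dhat z) ≤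
      pT z.1 * pX z.2 * ((1 - pJ z / (pJ z + pT z.1 * pX z.2)) / (1 - dhat z)) := by
    intro z
    set a := pJ z
    set b := pT z.1 * pX z.2
    have hab : 0 < a + b := hpos z
    have hdl : 0 < 1 - dhat z := by linarith [(hd01 z).2]
    have h1 : 1 - a / (a + b) = b / (a + b) := by
      field_simp
      ring
    have ht : 0 < (a + b) * (1 - dhat z) := by positivity
    rw [h1, div_div, ← mul_div_assoc, le_div_iff₀ ht]
    nlinarith [sq_nonneg (b - (a + b) * (1 - dhat z))]
  calc (1 : ℝ) = ∫ z, (2 * (pT z.1 * pX z.2) - (pJ z + pT z.1 * pX z.2) * (1 - dhat z))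
      ∂(μ.prod ν) := hlbval.symm
    _ ≤ _ := integral_mono hlbint hint hpw
end

section
/- For a balanced classifier d̂ with values in (0,1), combining Theorems 1 and 2: E_{p(θ,x)}[d/d̂] + E_{p(θ)p(x)}[(1−d)/(1−d̂)] ≥ 2, where d is the Bayes optimal classifier; equality holds when d̂ = d almost everywhere with respect to both measures. -/
open MeasureTheory

/-- For a balanced classifier `dhat` with values in (0,1) and the Bayes optimal
classifier `d z = pJ z / (pJ z + pT z.1 * pX z.2)`,
`E_{p(θ,x)}[d/dhat] + E_{p(θ)p(x)}[(1-d)/(1-dhat)] ≥ 2`, with equality when `dhat = d`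
almost everywhere with respect to both weighted measures. -/
theorem balanced_combined_ge_two {Θ X : Type*} [MeasurableSpace Θ] [MeasurableSpace X]
    (μ : Measure Θ) (ν : Measure X) [SigmaFinite μ] [SigmaFinite ν]
    (pJ : Θ × X → ℝ) (pT : Θ → ℝ) (pX : X → ℝ)
    (hpJ : ∀ z, 0 ≤ pJ z) (hpJ1 : ∫ z, pJ z ∂(μ.prod ν) = 1)
    (hpT : ∀ θ, 0 ≤ pT θ) (hpX : ∀ x, 0 ≤ pX x)
    (hpM1 : ∫ z, pT z.1 * pX z.2 ∂(μ.prod ν) = 1)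
    (hpos : ∀ z, 0 < pJ z + pT z.1 * pX z.2)
    (dhat : Θ × X → ℝ) (hdm : Measurable dhat)
    (hd01 : ∀ z, dhat z ∈ Set.Ioo (0 : ℝ) 1)
    (hbal : ∫ z, (pJ z + pT z.1 * pX z.2) * dhat z ∂(μ.prod ν) = 1)
    (hintJ : Integrable
      (fun z => pJ z * ((pJ z / (pJ z + pT z.1 * pX z.2)) / dhat z)) (μ.prod ν))
    (hintM : Integrable
      (fun z => pT z.1 * pX z.2 *
        ((1 - pJ z / (pJ z + pT z.1 * pX z.2)) / (1 - dhat z))) (μ.prod ν)) :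
    (2 : ℝ) ≤ (∫ z, pJ z * ((pJ z / (pJ z + pT z.1 * pX z.2)) / dhat z) ∂(μ.prod ν))
        + ∫ z, pT z.1 * pX z.2 *
            ((1 - pJ z / (pJ z + pT z.1 * pX z.2)) / (1 - dhat z)) ∂(μ.prod ν) ∧
      ((∀ᵐ z ∂((μ.prod ν).withDensity fun z => ENNReal.ofReal (pJ z)),
          dhat z = pJ z / (pJ z + pT z.1 * pX z.2)) →
        (∀ᵐ z ∂((μ.prod ν).withDensity fun z => ENNReal.ofReal (pT z.1 * pX z.2)),
          dhat z = pJ z / (pJ z + pT z.1 * pX z.2)) →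
        (∫ z, pJ z * ((pJ z / (pJ z + pT z.1 * pX z.2)) / dhat z) ∂(μ.prod ν))
          + ∫ z, pT z.1 * pX z.2 *
              ((1 - pJ z / (pJ z + pT z.1 * pX z.2)) / (1 - dhat z)) ∂(μ.prod ν) = 2) := by
  set π := μ.prod ν
  have hIntJ : Integrable pJ π := by
    by_contra h
    rw [integral_undef h] at hpJ1; norm_num at hpJ1
  have hIntM : Integrable (fun z => pT z.1 * pX z.2) π := by
    by_contra h
    rw [integral_undef h] at hpM1; norm_num at hpM1
  have hIntB : Integrable (fun z => (pJ z + pT z.1 * pX z.2) * dhat z) π := by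
    by_contra h
    rw [integral_undef h] at hbal; norm_num at hbal
  -- pointwise lower bounds
  have key1 : ∀ z, 2 * pJ z - (pJ z + pT z.1 * pX z.2) * dhat z ≤
      pJ z * ((pJ z / (pJ z + pT z.1 * pX z.2)) / dhat z) := by
    intro z
    obtain ⟨ht0, ht1⟩ := hd01 z
    have hS := hpos z
    have hs := hpJ z
    have heq : pJ z * ((pJ z / (pJ z + pT z.1 * pX z.2)) / dhat z)
        = pJ z ^ 2 / ((pJ z + pT z.1 * pX z.2) * dhat z) := by
      field_simp
    rw [heq, le_div_iff₀ (by positivity)]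
    nlinarith [sq_nonneg (pJ z - (pJ z + pT z.1 * pX z.2) * dhat z)]
  have key2 : ∀ z, 2 * (pT z.1 * pX z.2) - (pJ z + pT z.1 * pX z.2) * (1 - dhat z) ≤
      pT z.1 * pX z.2 * ((1 - pJ z / (pJ z + pT z.1 * pX z.2)) / (1 - dhat z)) := by
    intro z
    obtain ⟨ht0, ht1⟩ := hd01 z
    have hS := hpos z
    have hm : 0 ≤ pT z.1 * pX z.2 := mul_nonneg (hpT _) (hpX _)
    have h1t : 0 < 1 - dhat z := by linarith
    have heq : pT z.1 * pX z.2 * ((1 - pJ z / (pJ z + pT z.1 * pX z.2)) / (1 - dhat z))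
        = (pT z.1 * pX z.2) ^ 2 / ((pJ z + pT z.1 * pX z.2) * (1 - dhat z)) := by
      rw [one_sub_div hS.ne']
      have : pJ z + pT z.1 * pX z.2 - pJ z = pT z.1 * pX z.2 := by ring
      rw [this]
      field_simp
    rw [heq, le_div_iff₀ (by positivity)]
    nlinarith [sq_nonneg (pT z.1 * pX z.2 - (pJ z + pT z.1 * pX z.2) * (1 - dhat z))]
  have hIntL1 : Integrable (fun z => 2 * pJ z - (pJ z + pT z.1 * pX z.2) * dhat z) π :=
    (hIntJ.const_mul 2).sub hIntB
  have hIntL2 : Integrable (fun z =>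
      2 * (pT z.1 * pX z.2) - (pJ z + pT z.1 * pX z.2) * (1 - dhat z)) π := by
    have : (fun z => 2 * (pT z.1 * pX z.2) - (pJ z + pT z.1 * pX z.2) * (1 - dhat z))
        = fun z => 2 * (pT z.1 * pX z.2) - (pJ z + pT z.1 * pX z.2)
            + (pJ z + pT z.1 * pX z.2) * dhat z := by
      funext z; ring
    rw [this]
    exact ((hIntM.const_mul 2).sub (hIntJ.add hIntM)).add hIntB
  have ge1 : (1 : ℝ) ≤ ∫ z, pJ z * ((pJ z / (pJ z + pT z.1 * pX z.2)) / dhat z) ∂π := by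
    calc (1 : ℝ) = ∫ z, (2 * pJ z - (pJ z + pT z.1 * pX z.2) * dhat z) ∂π := by
          rw [integral_sub (hIntJ.const_mul 2) hIntB, integral_const_mul, hpJ1, hbal]; norm_num
      _ ≤ _ := integral_mono hIntL1 hintJ key1
  have ge2 : (1 : ℝ) ≤ ∫ z, pT z.1 * pX z.2 *
      ((1 - pJ z / (pJ z + pT z.1 * pX z.2)) / (1 - dhat z)) ∂π := by
    have hA : Integrable (fun z => 2 * (pT z.1 * pX z.2)
        - (pJ z + pT z.1 * pX z.2)) π := (hIntM.const_mul 2).sub (hIntJ.add hIntM)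
    have hB : Integrable (fun z => 2 * (pT z.1 * pX z.2)) π := hIntM.const_mul 2
    have hC : Integrable (fun z => pJ z + pT z.1 * pX z.2) π := hIntJ.add hIntM
    calc (1 : ℝ) = ∫ z, (2 * (pT z.1 * pX z.2)
            - (pJ z + pT z.1 * pX z.2) * (1 - dhat z)) ∂π := by
          have : (fun z => 2 * (pT z.1 * pX z.2) - (pJ z + pT z.1 * pX z.2) * (1 - dhat z))
              = fun z => (2 * (pT z.1 * pX z.2) - (pJ z + pT z.1 * pX z.2))
                  + (pJ z + pT z.1 * pX z.2) * dhat z := by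
            funext z; ring
          rw [this, integral_add hA hIntB, integral_sub hB hC, integral_const_mul,
            integral_add hIntJ hIntM, hpJ1, hpM1, hbal]
          norm_num
      _ ≤ _ := integral_mono hIntL2 hintM key2
  refine ⟨by linarith, fun hJ hM => ?_⟩
  -- equality case
  have hJae : ∀ᵐ z ∂π, pJ z ≠ 0 → dhat z = pJ z / (pJ z + pT z.1 * pX z.2) := by
    have := (ae_withDensity_iff' (p := fun z => dhat z = pJ z / (pJ z + pT z.1 * pX z.2))
      (ENNReal.measurable_ofReal.comp_aemeasurable hIntJ.aemeasurable)).mp hJ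
    filter_upwards [this] with z hz hne
    exact hz (ENNReal.ofReal_pos.mpr (lt_of_le_of_ne (hpJ z) (Ne.symm hne))).ne'
  have hMae : ∀ᵐ z ∂π, pT z.1 * pX z.2 ≠ 0 →
      dhat z = pJ z / (pJ z + pT z.1 * pX z.2) := by
    have := (ae_withDensity_iff' (p := fun z => dhat z = pJ z / (pJ z + pT z.1 * pX z.2))
      (ENNReal.measurable_ofReal.comp_aemeasurable hIntM.aemeasurable)).mp hM
    filter_upwards [this] with z hz hne
    exact hz (ENNReal.ofReal_pos.mpr
      (lt_of_le_of_ne (mul_nonneg (hpT _) (hpX _)) (Ne.symm hne))).ne'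
  have e1 : ∫ z, pJ z * ((pJ z / (pJ z + pT z.1 * pX z.2)) / dhat z) ∂π = 1 := by
    have hcong : ∫ z, pJ z * ((pJ z / (pJ z + pT z.1 * pX z.2)) / dhat z) ∂π
        = ∫ z, pJ z ∂π := by
      refine integral_congr_ae ?_
      filter_upwards [hJae] with z hz
      by_cases h : pJ z = 0
      · simp [h]
      · have hS := hpos z
        have hd : pJ z / (pJ z + pT z.1 * pX z.2) ≠ 0 :=
          div_ne_zero h hS.ne'
        rw [hz h, div_self hd, mul_one]
    rw [hcong, hpJ1]
  have e2 : ∫ z, pT z.1 * pX z.2 *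
      ((1 - pJ z / (pJ z + pT z.1 * pX z.2)) / (1 - dhat z)) ∂π = 1 := by
    have hcong : ∫ z, pT z.1 * pX z.2 *
        ((1 - pJ z / (pJ z + pT z.1 * pX z.2)) / (1 - dhat z)) ∂π
        = ∫ z, pT z.1 * pX z.2 ∂π := by
      refine integral_congr_ae ?_
      filter_upwards [hMae] with z hz
      by_cases h : pT z.1 * pX z.2 = 0
      · simp [h]
      · have hS := hpos z
        have hone : 1 - pJ z / (pJ z + pT z.1 * pX z.2)
            = pT z.1 * pX z.2 / (pJ z + pT z.1 * pX z.2) := by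
          rw [one_sub_div hS.ne']; congr 1; ring
        have hd : pT z.1 * pX z.2 / (pJ z + pT z.1 * pX z.2) ≠ 0 :=
          div_ne_zero h hS.ne'
        rw [hz h, hone, div_self hd, mul_one]
    rw [hcong, hpM1]
  rw [e1, e2]; norm_num
end
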